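/- Let V = ℂ^m regarded as a real inner product space of dimension 2m, with symplectic form σ = Σ dx^j ∧ dy^j and holomorphic volume form Υ = dz¹∧⋯∧dz^m. If ξ ∈ Gr_o(m,V) is a unit decomposable m-vector such that the m-plane [ξ] is Lagrangian (σ|_{[ξ]} = 0) and Im Υ vanishes on ξ, then |φ(ξ)| = 1 where φ = Re Υ; i.e., ξ or −ξ is special Lagrangian calibrated. -/

import Mathlib

/-- **Special Lagrangian planes.**  Let `V = ℂᵐ` viewed as a real inner product space of
dimension `2m`, with symplectic form `σ(u,v) = Im⟪u,v⟫_ℂ` and holomorphic volume form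
`Υ(v₁,…,v_m) = det[v_jⁱ]`.  If `ξ = e₁ ∧ ⋯ ∧ e_m` is a unit decomposable `m`-vector (the
`e_j` orthonormal for the real inner product `Re⟪·,·⟫_ℂ`) whose plane is Lagrangian
(`σ` vanishes on it) and on which `Im Υ` vanishes, then `|Re Υ(ξ)| = 1`, i.e. `ξ` or `-ξ`
is calibrated by the special Lagrangian calibration `φ = Re Υ`. -/
theorem lagrangian_with_imaginary_part_zero_is_special
    {m : ℕ} (e : Fin m → EuclideanSpace ℂ (Fin m))
    (hon : ∀ i j, (inner ℂ (e i) (e j) : ℂ).re = if i = j then (1 : ℝ) else 0)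
    (hlag : ∀ x y : EuclideanSpace ℂ (Fin m),
      x ∈ Submodule.span ℝ (Set.range e) → y ∈ Submodule.span ℝ (Set.range e) →
      (inner ℂ x y : ℂ).im = 0)
    (him : (Matrix.det (Matrix.of fun i j => e j i)).im = 0) :
    (Matrix.det (Matrix.of fun i j => e j i)).re = 1 ∨
      (Matrix.det (Matrix.of fun i j => e j i)).re = -1 := by
  set A : Matrix (Fin m) (Fin m) ℂ := Matrix.of fun i j => e j i with hA
  -- columns are complex-orthonormal
  have hinner : ∀ i j, (inner ℂ (e i) (e j) : ℂ) = if i = j then 1 else 0 := by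
    intro i j
    have h1 := hon i j
    have h2 := hlag (e i) (e j) (Submodule.subset_span ⟨i, rfl⟩)
      (Submodule.subset_span ⟨j, rfl⟩)
    apply Complex.ext
    · rw [h1]; split_ifs <;> simp
    · rw [h2]; split_ifs <;> simp
  have hunit : A.conjTranspose * A = 1 := by
    ext i j
    have : (A.conjTranspose * A) i j = ∑ k, star (e i k) * e j k := by
      simp [Matrix.mul_apply, Matrix.conjTranspose_apply, hA, mul_comm]
    rw [this]
    have hik : (inner ℂ (e i) (e j) : ℂ) = ∑ k, star (e i k) * e j k := by
      simp [PiLp.inner_apply, RCLike.inner_apply, mul_comm]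
    rw [← hik, hinner]
    split_ifs <;> simp_all [Matrix.one_apply]
  have hdet : star A.det * A.det = 1 := by
    have := congrArg Matrix.det hunit
    rwa [Matrix.det_mul, Matrix.det_conjTranspose, Matrix.det_one] at this
  set d : ℂ := A.det with hd
  have hre : d.re * d.re = 1 := by
    have h1 : (star d * d).re = d.re * d.re + d.im * d.im := by
      simp [Complex.mul_re, mul_comm]
    rw [hdet] at h1
    rw [him] at h1
    simp at h1
    linarith
  rcases mul_self_eq_one_iff.mp hre with h | h
  · exact Or.inl h
  · exact Or.inr h
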